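/- Let e_0, e_1 ∈ C¹([0,T]×[x_L,x_R]) satisfy the system ∂_t e_0 + ∂_x e_1 = D_1 and ∂_t e_1 + C_1(x) e_0 = D_2, where C_1 is continuous and bounded by M on [x_L,x_R]. Define E(t) = (1/2)∫_{x_L}^{x_R} (e_0(t,x)² + e_1(t,x)²) dx. Then for all t ∈ [0,T], E'(t) ≤ D_3(t) + C(E(t) + ‖∂_x e_0(t,·)‖²_{L²}) + (1/2)‖D_1(t,·)‖²_{L²} + (1/2)‖D_2(t,·)‖²_{L²}, where D_3(t) = |e_0(t,x_L)e_1(t,x_L)| + |e_0(t,x_R)e_1(t,x_R)| and C is a constant depending only on M. -/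

import Mathlib

open MeasureTheory Set intervalIntegral

noncomputable def pdt (f : ℝ → ℝ → ℝ) (p : ℝ × ℝ) : ℝ :=
  fderiv ℝ (fun q : ℝ × ℝ => f q.1 q.2) p (1, 0)

noncomputable def pdx (f : ℝ → ℝ → ℝ) (p : ℝ × ℝ) : ℝ :=
  fderiv ℝ (fun q : ℝ × ℝ => f q.1 q.2) p (0, 1)

lemma hasDerivAt_pdt {f : ℝ → ℝ → ℝ}
    (hf : Differentiable ℝ (fun q : ℝ × ℝ => f q.1 q.2)) (s x : ℝ) :
    HasDerivAt (fun s' => f s' x) (pdt f (s, x)) s :=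
  (hf (s, x)).hasFDerivAt.comp_hasDerivAt (f := fun s' => (s', x)) s
    ((hasDerivAt_id s).prodMk (hasDerivAt_const s x))

lemma hasDerivAt_pdx {f : ℝ → ℝ → ℝ}
    (hf : Differentiable ℝ (fun q : ℝ × ℝ => f q.1 q.2)) (s x : ℝ) :
    HasDerivAt (fun y => f s y) (pdx f (s, x)) x :=
  (hf (s, x)).hasFDerivAt.comp_hasDerivAt (f := fun y => (s, y)) x
    ((hasDerivAt_const x s).prodMk (hasDerivAt_id x))

lemma continuous_pdt {f : ℝ → ℝ → ℝ}
    (hf : ContDiff ℝ 1 (fun q : ℝ × ℝ => f q.1 q.2)) : Continuous (pdt f) :=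
  (hf.continuous_fderiv one_ne_zero).clm_apply continuous_const

lemma continuous_pdx {f : ℝ → ℝ → ℝ}
    (hf : ContDiff ℝ 1 (fun q : ℝ × ℝ => f q.1 q.2)) : Continuous (pdx f) :=
  (hf.continuous_fderiv one_ne_zero).clm_apply continuous_const

lemma deriv_eq_pdt {f : ℝ → ℝ → ℝ}
    (hf : Differentiable ℝ (fun q : ℝ × ℝ => f q.1 q.2)) (s x : ℝ) :
    deriv (fun s' => f s' x) s = pdt f (s, x) :=
  (hasDerivAt_pdt hf s x).deriv

lemma deriv_eq_pdx {f : ℝ → ℝ → ℝ}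
    (hf : Differentiable ℝ (fun q : ℝ × ℝ => f q.1 q.2)) (s x : ℝ) :
    deriv (fun y => f s y) x = pdx f (s, x) :=
  (hasDerivAt_pdx hf s x).deriv

lemma energy_hasDerivAt (xL xR : ℝ) (f g : ℝ → ℝ → ℝ)
    (hf : ContDiff ℝ 1 (fun q : ℝ × ℝ => f q.1 q.2))
    (hg : ContDiff ℝ 1 (fun q : ℝ × ℝ => g q.1 q.2)) (t : ℝ) :
    HasDerivAt (fun s => ∫ x in xL..xR, (f s x ^ 2 + g s x ^ 2))
      (∫ x in xL..xR, (2 * f t x * pdt f (t, x) + 2 * g t x * pdt g (t, x))) t := by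
  have hdf := hf.differentiable one_ne_zero
  have hdg := hg.differentiable one_ne_zero
  set Fd : ℝ × ℝ → ℝ := fun p => 2 * f p.1 p.2 * pdt f p + 2 * g p.1 p.2 * pdt g p with hFdd
  have hFdc : Continuous Fd := by
    apply Continuous.add
    · exact (continuous_const.mul hf.continuous).mul (continuous_pdt hf)
    · exact (continuous_const.mul hg.continuous).mul (continuous_pdt hg)
  obtain ⟨C₀, hC₀⟩ := ((isCompact_Icc (a := t - 1) (b := t + 1)).prod
    (isCompact_uIcc (a := xL) (b := xR))).exists_bound_of_continuousOn hFdc.continuousOn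
  have hmk : ∀ s : ℝ, Continuous fun x : ℝ => (s, x) :=
    fun s => continuous_const.prodMk continuous_id
  have hcont : ∀ s : ℝ, Continuous (fun x => f s x ^ 2 + g s x ^ 2) := fun s =>
    ((hf.continuous.comp (hmk s)).pow 2).add ((hg.continuous.comp (hmk s)).pow 2)
  have key := intervalIntegral.hasDerivAt_integral_of_dominated_loc_of_deriv_le
    (μ := volume) (a := xL) (b := xR) (F := fun s x => f s x ^ 2 + g s x ^ 2)
    (F' := fun s x => Fd (s, x)) (x₀ := t) (bound := fun _ => C₀) (s := Metric.ball t 1) (Metric.ball_mem_nhds t one_pos)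
    (Filter.Eventually.of_forall fun s => ((hcont s).aestronglyMeasurable))
    ((hcont t).intervalIntegrable xL xR)
    ((hFdc.comp (hmk t)).aestronglyMeasurable)
    (ae_of_all _ fun x hx s hs => by
      apply hC₀
      constructor
      · rw [Metric.mem_ball, Real.dist_eq] at hs
        have := abs_lt.mp hs
        constructor <;> simp <;> linarith [this.1, this.2]
      · exact Set.uIoc_subset_uIcc hx)
    (intervalIntegrable_const)
    (ae_of_all _ fun x hx s hs => by
      have h1 := ((hasDerivAt_pdt hdf s x).pow 2).add ((hasDerivAt_pdt hdg s x).pow 2)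
      convert h1 using 1
      · ext y; simp only [Pi.add_apply, Pi.pow_apply]
      simp only [hFdd]
      push_cast
      ring)
  exact key.2

/-- Energy estimate for the error system: if (e₀, e₁) solve
∂ₜe₀ + ∂ₓe₁ = D₁ and ∂ₜe₁ + C₁(x)e₀ = D₂ with |C₁| ≤ M, then the energy
E(t) = ½∫(e₀² + e₁²) satisfies the differential inequality
E'(t) ≤ D₃(t) + C(E(t) + ‖∂ₓe₀(t,·)‖²) + ½‖D₁(t,·)‖² + ½‖D₂(t,·)‖²
for a constant C depending only on M. -/
theorem stmt_9 (T xL xR M : ℝ) (hT : 0 < T) (hx : xL ≤ xR) (hM : 0 ≤ M)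
    (e0 e1 D1 D2 : ℝ → ℝ → ℝ) (C1 : ℝ → ℝ)
    (he0 : ContDiff ℝ 1 (fun p : ℝ × ℝ => e0 p.1 p.2))
    (he1 : ContDiff ℝ 1 (fun p : ℝ × ℝ => e1 p.1 p.2))
    (hD1 : Continuous (fun p : ℝ × ℝ => D1 p.1 p.2))
    (hD2 : Continuous (fun p : ℝ × ℝ => D2 p.1 p.2))
    (hC1 : Continuous C1) (hC1bound : ∀ x ∈ Set.Icc xL xR, |C1 x| ≤ M)
    (heq1 : ∀ t ∈ Set.Icc 0 T, ∀ x ∈ Set.Icc xL xR,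
      deriv (fun s => e0 s x) t + deriv (fun y => e1 t y) x = D1 t x)
    (heq2 : ∀ t ∈ Set.Icc 0 T, ∀ x ∈ Set.Icc xL xR,
      deriv (fun s => e1 s x) t + C1 x * e0 t x = D2 t x)
    (E D3 : ℝ → ℝ)
    (hE : ∀ t, E t = (1 / 2) * ∫ x in xL..xR, (e0 t x ^ 2 + e1 t x ^ 2))
    (hD3 : ∀ t, D3 t = |e0 t xL * e1 t xL| + |e0 t xR * e1 t xR|) :
    ∃ C : ℝ, ∀ t ∈ Set.Icc 0 T,
      deriv E t ≤ D3 t + C * (E t + ∫ x in xL..xR, (deriv (fun y => e0 t y) x) ^ 2)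
        + (1 / 2) * (∫ x in xL..xR, D1 t x ^ 2)
        + (1 / 2) * (∫ x in xL..xR, D2 t x ^ 2) := by
  have hdf0 := he0.differentiable one_ne_zero
  have hdf1 := he1.differentiable one_ne_zero
  have hmk : ∀ s : ℝ, Continuous fun x : ℝ => (s, x) :=
    fun s => continuous_const.prodMk continuous_id
  refine ⟨2 + M, fun t ht => ?_⟩
  -- continuity facts at fixed t
  have hc0 : Continuous fun x => e0 t x := he0.continuous.comp (hmk t)
  have hc1 : Continuous fun x => e1 t x := he1.continuous.comp (hmk t)
  have hcD1 : Continuous fun x => D1 t x := hD1.comp (hmk t)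
  have hcD2 : Continuous fun x => D2 t x := hD2.comp (hmk t)
  have hcpx0 : Continuous fun x => pdx e0 (t, x) := (continuous_pdx he0).comp (hmk t)
  have hcpx1 : Continuous fun x => pdx e1 (t, x) := (continuous_pdx he1).comp (hmk t)
  -- derivative of E
  have hEfun : E = fun s => (1 / 2) * ∫ x in xL..xR, (e0 s x ^ 2 + e1 s x ^ 2) := funext hE
  have hEd : deriv E t = (1 / 2) *
      ∫ x in xL..xR, (2 * e0 t x * pdt e0 (t, x) + 2 * e1 t x * pdt e1 (t, x)) := by
    rw [hEfun]
    exact (((energy_hasDerivAt xL xR e0 e1 he0 he1 t).const_mul ((1:ℝ) / 2))).deriv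
  -- use the PDE to rewrite the integrand
  have hcongr : (∫ x in xL..xR, (2 * e0 t x * pdt e0 (t, x) + 2 * e1 t x * pdt e1 (t, x)))
      = ∫ x in xL..xR, (2 : ℝ) * ((e0 t x * D1 t x + e1 t x * D2 t x
          - C1 x * (e0 t x * e1 t x)) - e0 t x * pdx e1 (t, x)) := by
    apply intervalIntegral.integral_congr
    intro x hmem
    rw [Set.uIcc_of_le hx] at hmem
    have h1 := heq1 t ht x hmem
    have h2 := heq2 t ht x hmem
    rw [deriv_eq_pdt hdf0, deriv_eq_pdx hdf1] at h1
    rw [deriv_eq_pdt hdf1] at h2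
    dsimp only
    linear_combination (2 * e0 t x) * h1 + (2 * e1 t x) * h2
  -- integrability
  have i1 : IntervalIntegrable (fun x => e0 t x * D1 t x + e1 t x * D2 t x
      - C1 x * (e0 t x * e1 t x)) MeasureTheory.volume xL xR :=
    (((hc0.mul hcD1).add (hc1.mul hcD2)).sub (hC1.mul (hc0.mul hc1))).intervalIntegrable xL xR
  have i2 : IntervalIntegrable (fun x => e0 t x * pdx e1 (t, x))
      MeasureTheory.volume xL xR := (hc0.mul hcpx1).intervalIntegrable xL xR
  have i3 : IntervalIntegrable (fun x => pdx e0 (t, x) * e1 t x)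
      MeasureTheory.volume xL xR := (hcpx0.mul hc1).intervalIntegrable xL xR
  have hconst : (∫ x in xL..xR, (2 : ℝ) * ((e0 t x * D1 t x + e1 t x * D2 t x
          - C1 x * (e0 t x * e1 t x)) - e0 t x * pdx e1 (t, x)))
      = 2 * ((∫ x in xL..xR, (e0 t x * D1 t x + e1 t x * D2 t x
          - C1 x * (e0 t x * e1 t x))) - ∫ x in xL..xR, e0 t x * pdx e1 (t, x)) := by
    rw [intervalIntegral.integral_const_mul, intervalIntegral.integral_sub i1 i2]
  -- integration by parts
  have hibp : (∫ x in xL..xR, e0 t x * pdx e1 (t, x))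
      = e0 t xR * e1 t xR - e0 t xL * e1 t xL - ∫ x in xL..xR, pdx e0 (t, x) * e1 t x :=
    intervalIntegral.integral_mul_deriv_eq_deriv_mul
      (fun x _ => hasDerivAt_pdx hdf0 t x) (fun x _ => hasDerivAt_pdx hdf1 t x)
      (hcpx0.intervalIntegrable xL xR) (hcpx1.intervalIntegrable xL xR)
  -- combine the two remaining integrals
  have hadd : (∫ x in xL..xR, ((e0 t x * D1 t x + e1 t x * D2 t x
          - C1 x * (e0 t x * e1 t x)) + pdx e0 (t, x) * e1 t x))
      = (∫ x in xL..xR, (e0 t x * D1 t x + e1 t x * D2 t x - C1 x * (e0 t x * e1 t x)))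
        + ∫ x in xL..xR, pdx e0 (t, x) * e1 t x :=
    intervalIntegral.integral_add i1 i3
  -- monotonicity: pointwise Young inequalities
  have q1 : IntervalIntegrable (fun x => (1 + M / 2) * (e0 t x ^ 2 + e1 t x ^ 2))
      MeasureTheory.volume xL xR :=
    (continuous_const.mul ((hc0.pow 2).add (hc1.pow 2))).intervalIntegrable xL xR
  have q2 : IntervalIntegrable (fun x => (1 / 2 : ℝ) * D1 t x ^ 2)
      MeasureTheory.volume xL xR := (continuous_const.mul (hcD1.pow 2)).intervalIntegrable xL xR
  have q3 : IntervalIntegrable (fun x => (1 / 2 : ℝ) * D2 t x ^ 2)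
      MeasureTheory.volume xL xR := (continuous_const.mul (hcD2.pow 2)).intervalIntegrable xL xR
  have q4 : IntervalIntegrable (fun x => (1 / 2 : ℝ) * pdx e0 (t, x) ^ 2)
      MeasureTheory.volume xL xR := (continuous_const.mul (hcpx0.pow 2)).intervalIntegrable xL xR
  have hmono : (∫ x in xL..xR, ((e0 t x * D1 t x + e1 t x * D2 t x
          - C1 x * (e0 t x * e1 t x)) + pdx e0 (t, x) * e1 t x))
      ≤ ∫ x in xL..xR, ((1 + M / 2) * (e0 t x ^ 2 + e1 t x ^ 2)
          + (1 / 2 : ℝ) * D1 t x ^ 2 + (1 / 2 : ℝ) * D2 t x ^ 2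
          + (1 / 2 : ℝ) * pdx e0 (t, x) ^ 2) := by
    apply intervalIntegral.integral_mono_on hx (i1.add i3) (((q1.add q2).add q3).add q4)
    intro x hmem
    have hb := abs_le.mp (hC1bound x hmem)
    nlinarith [sq_nonneg (e0 t x - D1 t x), sq_nonneg (e1 t x - D2 t x),
      sq_nonneg (pdx e0 (t, x) - e1 t x),
      mul_nonneg (by linarith [hb.2] : (0:ℝ) ≤ M - C1 x) (sq_nonneg (e0 t x + e1 t x)),
      mul_nonneg (by linarith [hb.1] : (0:ℝ) ≤ M + C1 x) (sq_nonneg (e0 t x - e1 t x))]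
  -- split the right-hand side
  have hsplit : (∫ x in xL..xR, ((1 + M / 2) * (e0 t x ^ 2 + e1 t x ^ 2)
          + (1 / 2 : ℝ) * D1 t x ^ 2 + (1 / 2 : ℝ) * D2 t x ^ 2
          + (1 / 2 : ℝ) * pdx e0 (t, x) ^ 2))
      = (1 + M / 2) * (∫ x in xL..xR, (e0 t x ^ 2 + e1 t x ^ 2))
        + (1 / 2) * (∫ x in xL..xR, D1 t x ^ 2) + (1 / 2) * (∫ x in xL..xR, D2 t x ^ 2)
        + (1 / 2) * ∫ x in xL..xR, pdx e0 (t, x) ^ 2 := by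
    rw [intervalIntegral.integral_add ((q1.add q2).add q3) q4,
      intervalIntegral.integral_add (q1.add q2) q3,
      intervalIntegral.integral_add q1 q2,
      intervalIntegral.integral_const_mul, intervalIntegral.integral_const_mul,
      intervalIntegral.integral_const_mul, intervalIntegral.integral_const_mul]
  -- rewrite the goal's integral
  have hrw : (∫ x in xL..xR, (deriv (fun y => e0 t y) x) ^ 2)
      = ∫ x in xL..xR, pdx e0 (t, x) ^ 2 := by
    apply intervalIntegral.integral_congr
    intro x _
    dsimp only
    rw [deriv_eq_pdx hdf0]
  have hnn : 0 ≤ ∫ x in xL..xR, pdx e0 (t, x) ^ 2 :=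
    intervalIntegral.integral_nonneg hx (fun x _ => sq_nonneg _)
  have hErel : (∫ x in xL..xR, (e0 t x ^ 2 + e1 t x ^ 2)) = 2 * E t := by
    have := hE t; linarith
  rw [hrw, hD3 t]
  have habsL := le_abs_self (e0 t xL * e1 t xL)
  have habsR := neg_abs_le (e0 t xR * e1 t xR)
  rw [hErel] at hsplit
  nlinarith [hEd, hcongr, hconst, hibp, hadd, hmono, hsplit, hnn, hM, mul_nonneg hM hnn]
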